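/- Let L₀ be a Lindblad generator of the form L₀a = Σ_j ([ℓ_j*,a]ℓ_j + ℓ_j*[a,ℓ_j]) on A = End(H) that is self-adjoint on L₂(σ) for a faithful state σ. Then its Dirichlet form satisfies E_σ(a) := -⟨L₀a, a⟩_σ = Σ_j ‖[ℓ_j*, a]‖_σ², and consequently E_σ(a) = 0 if and only if a commutes with all ℓ_j and ℓ_j*. -/

import Mathlib

noncomputable section

open ContinuousLinearMap

/-- The algebra `A = End(H)` for `H = ℂⁿ` a finite-dimensional Hilbert space. -/
abbrev QA (n : ℕ) := EuclideanSpace ℂ (Fin n) →L[ℂ] EuclideanSpace ℂ (Fin n)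

/-- The trace of an operator on the finite-dimensional Hilbert space. -/
noncomputable def trC {n : ℕ} (a : QA n) : ℂ :=
  LinearMap.trace ℂ (EuclideanSpace ℂ (Fin n)) (a : _ →ₗ[ℂ] _)

/-- The GNS inner product `⟨a,b⟩_σ = tr(a* σ b)`. -/
noncomputable def gns {n : ℕ} (σ a b : QA n) : ℂ :=
  trC ((ContinuousLinearMap.adjoint a ∘L σ) ∘L b)

/-- The Lindblad generator `L₀ a = Σ_j ([ℓ_j*, a] ℓ_j + ℓ_j* [a, ℓ_j])`. -/
noncomputable def lindblad {n N : ℕ} (ℓ : Fin N → QA n) (a : QA n) : QA n :=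
  ∑ j : Fin N,
    ((ContinuousLinearMap.adjoint (ℓ j) ∘L a - a ∘L ContinuousLinearMap.adjoint (ℓ j)) ∘L ℓ j
      + ContinuousLinearMap.adjoint (ℓ j) ∘L (a ∘L ℓ j - ℓ j ∘L a))

/-- The commutator `[ℓ_j*, a]`. -/
noncomputable def commStar {n : ℕ} (ℓ a : QA n) : QA n :=
  ContinuousLinearMap.adjoint ℓ ∘L a - a ∘L ContinuousLinearMap.adjoint ℓ

section Aux

variable {n N : ℕ}

lemma trC_sub' (a b : QA n) : trC (a - b) = trC a - trC b := by simp [trC, map_sub]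
lemma trC_add' (a b : QA n) : trC (a + b) = trC a + trC b := by simp [trC, map_add]
lemma trC_sum' (f : Fin N → QA n) : trC (∑ j, f j) = ∑ j, trC (f j) := by simp [trC]
lemma comp_eq_mul' (a b : QA n) : a ∘L b = a * b := rfl

lemma trC_mul_comm' (a b : QA n) : trC (a * b) = trC (b * a) := by
  have := LinearMap.trace_mul_comm ℂ (a.toLinearMap) (b.toLinearMap)
  simpa [trC, ContinuousLinearMap.mul_def, ContinuousLinearMap.coe_comp,
    Module.End.mul_eq_comp] using this

lemma rotA' (x1 x2 x3 x4 x5 : QA n) :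
    trC (x1*(x2*(x3*(x4*x5)))) = trC (x2*(x3*(x4*(x5*x1)))) := by
  rw [trC_mul_comm']; simp only [mul_assoc]
lemma rotB' (x1 x2 x3 x4 x5 : QA n) :
    trC (x1*(x2*(x3*(x4*x5)))) = trC (x3*(x4*(x5*(x1*x2)))) := by rw [rotA', rotA']
lemma rotC' (x1 x2 x3 x4 x5 : QA n) :
    trC (x1*(x2*(x3*(x4*x5)))) = trC (x4*(x5*(x1*(x2*x3)))) := by rw [rotB', rotA']

lemma lindblad_one' (ℓ : Fin N → QA n) : lindblad ℓ (1 : QA n) = 0 := by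
  simp [lindblad, comp_eq_mul']

lemma gns_zero_left' (σ c : QA n) : gns σ 0 c = 0 := by
  simp [gns, trC]

lemma starQ_sub (a b : QA n) : star (a - b) = star a - star b := star_sub a b
lemma starQ_add (a b : QA n) : star (a + b) = star a + star b := star_add a b
lemma starQ_mul (a b : QA n) : star (a * b) = star b * star a := star_mul a b
lemma starQ_star (a : QA n) : star (star a) = a := star_star a
lemma starQ_sum (f : Fin N → QA n) : star (∑ j, f j) = ∑ j, star (f j) := star_sum _ f

lemma lindblad_star' (ℓ : Fin N → QA n) (a : QA n) :
    star (lindblad ℓ a) = lindblad ℓ (star a) := by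
  simp only [lindblad, comp_eq_mul', ← ContinuousLinearMap.star_eq_adjoint,
    starQ_sum, starQ_add, starQ_sub, starQ_mul, starQ_star]
  exact Finset.sum_congr rfl fun j _ => add_comm _ _

section expand
variable (σ : QA n) (ℓ : Fin N → QA n) (a b : QA n)

lemma exp1' : gns σ (lindblad ℓ a) b =
    ∑ j, (2 * trC (σ * (b * (star (ℓ j) * (star a * ℓ j))))
      - trC (σ * (b * (star (ℓ j) * (ℓ j * star a))))
      - trC (σ * (b * (star a * (star (ℓ j) * ℓ j))))) := by
  simp only [gns, lindblad, comp_eq_mul', ← ContinuousLinearMap.star_eq_adjoint,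
    star_sum, star_mul, star_sub, star_add, star_star, Finset.sum_mul, Finset.mul_sum,
    sub_mul, mul_sub, add_mul, mul_add, trC_sum', trC_sub', trC_add', mul_assoc]
  refine Finset.sum_congr rfl fun j _ => ?_
  rw [rotC' (star (ℓ j)) (star a) (ℓ j) σ b, rotC' (star (ℓ j)) (ℓ j) (star a) σ b,
      rotC' (star a) (star (ℓ j)) (ℓ j) σ b]
  ring

lemma exp2' : gns σ a (lindblad ℓ b) =
    ∑ j, (2 * trC (σ * (star (ℓ j) * (b * (ℓ j * star a))))
      - trC (σ * (b * (star (ℓ j) * (ℓ j * star a))))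
      - trC (σ * (star (ℓ j) * (ℓ j * (b * star a))))) := by
  simp only [gns, lindblad, comp_eq_mul', ← ContinuousLinearMap.star_eq_adjoint,
    star_sum, star_mul, star_sub, star_add, star_star, Finset.sum_mul, Finset.mul_sum,
    sub_mul, mul_sub, add_mul, mul_add, trC_sum', trC_sub', trC_add', mul_assoc]
  refine Finset.sum_congr rfl fun j _ => ?_
  rw [rotA' (star a) σ (star (ℓ j)) b (ℓ j), rotA' (star a) σ b (star (ℓ j)) (ℓ j),
      rotA' (star a) σ (star (ℓ j)) (ℓ j) b]
  ring

lemma exp3' : gns σ 1 (lindblad ℓ (b * star a)) =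
    ∑ j, (2 * trC (σ * (star (ℓ j) * (b * (star a * ℓ j))))
      - trC (σ * (b * (star a * (star (ℓ j) * ℓ j))))
      - trC (σ * (star (ℓ j) * (ℓ j * (b * star a))))) := by
  simp only [gns, lindblad, comp_eq_mul', ← ContinuousLinearMap.star_eq_adjoint,
    star_sum, star_mul, star_sub, star_add, star_star, star_one, one_mul, Finset.sum_mul,
    Finset.mul_sum, sub_mul, mul_sub, add_mul, mul_add, trC_sum', trC_sub', trC_add',
    mul_assoc]
  refine Finset.sum_congr rfl fun j _ => ?_
  ring

lemma exp4' (j : Fin N) : gns σ (commStar (ℓ j) a) (commStar (ℓ j) b) =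
    trC (σ * (star (ℓ j) * (b * (star a * ℓ j))))
      - trC (σ * (b * (star (ℓ j) * (star a * ℓ j))))
      - trC (σ * (star (ℓ j) * (b * (ℓ j * star a))))
      + trC (σ * (b * (star (ℓ j) * (ℓ j * star a)))) := by
  simp only [gns, commStar, comp_eq_mul', ← ContinuousLinearMap.star_eq_adjoint,
    star_mul, star_sub, star_star, sub_mul, mul_sub, trC_sub', mul_assoc]
  rw [rotB' (star a) (ℓ j) σ (star (ℓ j)) b, rotB' (star a) (ℓ j) σ b (star (ℓ j)),
      rotB' (ℓ j) (star a) σ (star (ℓ j)) b, rotB' (ℓ j) (star a) σ b (star (ℓ j))]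
  ring

end expand

/-- The master (polarized) identity: `-⟨L₀a, b⟩_σ = Σ_j ⟨[ℓ_j*,a], [ℓ_j*,b]⟩_σ`. -/
lemma master' (σ : QA n) (ℓ : Fin N → QA n)
    (hsa : ∀ a b : QA n, gns σ (lindblad ℓ a) b = gns σ a (lindblad ℓ b)) (a b : QA n) :
    -(gns σ (lindblad ℓ a) b) = ∑ j, gns σ (commStar (ℓ j) a) (commStar (ℓ j) b) := by
  have h1 := hsa a b
  have h2 := hsa 1 (b * star a)
  rw [lindblad_one', gns_zero_left'] at h2
  rw [exp1', exp2'] at h1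
  rw [exp3'] at h2
  rw [exp1', Finset.sum_congr rfl fun j _ => exp4' σ ℓ a b j]
  simp only [Finset.sum_sub_distrib, Finset.sum_add_distrib, ← Finset.mul_sum] at h1 h2 ⊢
  linear_combination (-(1:ℂ)/2) * h1 + (1:ℂ)/2 * h2

open scoped ComplexOrder

lemma trC_eq_sum' (T : QA n) :
    trC T = ∑ i, inner ℂ ((EuclideanSpace.basisFun (Fin n) ℂ) i)
      (T ((EuclideanSpace.basisFun (Fin n) ℂ) i)) := by
  rw [trC, LinearMap.trace_eq_matrix_trace ℂ (EuclideanSpace.basisFun (Fin n) ℂ).toBasis]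
  rw [Matrix.trace]
  congr 1
  ext i
  rw [Matrix.diag, LinearMap.toMatrix_apply]
  simp [EuclideanSpace.basisFun_apply, EuclideanSpace.inner_single_left]

lemma gns_self_eq_sum' (σ x : QA n) :
    gns σ x x = ∑ i, inner ℂ (x ((EuclideanSpace.basisFun (Fin n) ℂ) i))
      (σ (x ((EuclideanSpace.basisFun (Fin n) ℂ) i))) := by
  rw [gns, trC_eq_sum']
  congr 1
  ext i
  rw [ContinuousLinearMap.comp_apply, ContinuousLinearMap.comp_apply,
    ContinuousLinearMap.adjoint_inner_right]

lemma inner_sigma_nonneg' {σ : QA n} (hσpos : σ.IsPositive) (w : EuclideanSpace ℂ (Fin n)) :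
    0 ≤ (inner ℂ w (σ w) : ℂ) := by
  have h1 : (inner ℂ (σ w) w : ℂ) = inner ℂ w (σ w) := by
    conv_lhs => rw [← hσpos.isSelfAdjoint.adjoint_eq]
    exact ContinuousLinearMap.adjoint_inner_left σ w w
  have hconj : (starRingEnd ℂ) (inner ℂ w (σ w) : ℂ) = inner ℂ w (σ w) := by
    rw [inner_conj_symm, h1]
  rw [Complex.le_def]
  constructor
  · have := hσpos.inner_nonneg_left w
    rw [h1] at this
    exact (Complex.le_def.mp this).1
  · have := congrArg Complex.im hconj
    simp only [Complex.conj_im] at this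
    simp only [Complex.zero_im]
    linarith

lemma gns_self_nonneg' {σ : QA n} (hσpos : σ.IsPositive) (x : QA n) : 0 ≤ gns σ x x := by
  rw [gns_self_eq_sum']
  exact Finset.sum_nonneg fun i _ => inner_sigma_nonneg' hσpos _

lemma pos_inner_zero' {σ : QA n} (hσpos : σ.IsPositive) (w : EuclideanSpace ℂ (Fin n))
    (h : (inner ℂ w (σ w) : ℂ) = 0) : σ w = 0 := by
  set u := σ w with hu
  have hsa : ∀ x y : EuclideanSpace ℂ (Fin n), (inner ℂ (σ x) y : ℂ) = inner ℂ x (σ y) := by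
    intro x y
    conv_lhs => rw [← hσpos.isSelfAdjoint.adjoint_eq]
    exact ContinuousLinearMap.adjoint_inner_left σ y x
  set q : ℝ := ‖u‖^2 with hq
  set c : ℝ := RCLike.re (inner ℂ (σ u) u : ℂ) with hc
  have hc0 : 0 ≤ c := by
    have := (Complex.le_def.mp (hσpos.inner_nonneg_left u)).1; simpa [hc] using this
  set t : ℝ := -q/(c+1) with ht
  have key := hσpos.2 (w + (t:ℂ) • u)
  have h1 : (inner ℂ u w : ℂ) = 0 := by rw [← inner_conj_symm, h]; simp
  have h2 : (inner ℂ (σ u) w : ℂ) = (q:ℝ) := by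
    rw [hsa u w, ← hu, inner_self_eq_norm_sq_to_K]; norm_cast
  have h3 : (inner ℂ u u : ℂ) = (q:ℝ) := by rw [inner_self_eq_norm_sq_to_K]; norm_cast
  have expand : σ.reApplyInnerSelf (w + (t:ℂ) • u) = 2*t*q + t^2*c := by
    rw [ContinuousLinearMap.reApplyInnerSelf_apply, map_add, map_smul]
    rw [inner_add_left, inner_add_right, inner_add_right]
    rw [inner_smul_left, inner_smul_right, inner_smul_left, inner_smul_right]
    rw [← hu, h1, h2, h3]
    simp only [Complex.conj_ofReal, map_zero]
    rw [hc]
    simp [Complex.ofReal_mul]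
    ring
  rw [expand] at key
  have hq0 : 0 ≤ q := sq_nonneg _
  have hcpos : (0:ℝ) < c + 1 := by linarith
  have hqz : q = 0 := by
    rw [ht] at key
    have h4 : 0 ≤ (2 * (-q / (c + 1)) * q + (-q / (c + 1)) ^ 2 * c) * (c+1)^2 :=
      mul_nonneg key (by positivity)
    have h5 : (2 * (-q / (c + 1)) * q + (-q / (c + 1)) ^ 2 * c) * (c+1)^2
        = -(q^2) * (c + 2) := by field_simp; ring
    nlinarith [h4, h5, sq_nonneg q, hc0, hq0]
  have : ‖u‖ = 0 := by
    have := hq ▸ hqz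
    nlinarith [norm_nonneg u]
  simpa using this

lemma gns_self_eq_zero' {σ σinv : QA n} (hσpos : σ.IsPositive)
    (hσinv' : σinv ∘L σ = 1) {x : QA n} (h : gns σ x x = 0) : x = 0 := by
  rw [gns_self_eq_sum'] at h
  have hz : ∀ i ∈ Finset.univ, (inner ℂ (x ((EuclideanSpace.basisFun (Fin n) ℂ) i))
      (σ (x ((EuclideanSpace.basisFun (Fin n) ℂ) i))) : ℂ) = 0 :=
    (Finset.sum_eq_zero_iff_of_nonneg (fun i _ => inner_sigma_nonneg' hσpos _)).mp h
  have hxz : ∀ i, x ((EuclideanSpace.basisFun (Fin n) ℂ) i) = 0 := by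
    intro i
    have h1 : σ (x ((EuclideanSpace.basisFun (Fin n) ℂ) i)) = 0 :=
      pos_inner_zero' hσpos _ (hz i (Finset.mem_univ i))
    have h2 := congrArg (fun T : QA n => T (x ((EuclideanSpace.basisFun (Fin n) ℂ) i))) hσinv'
    simp only [ContinuousLinearMap.comp_apply, ContinuousLinearMap.one_apply] at h2
    rw [h1] at h2
    simpa using h2.symm
  have : x.toLinearMap = (0 : QA n).toLinearMap :=
    Module.Basis.ext (EuclideanSpace.basisFun (Fin n) ℂ).toBasis (by simpa using hxz)
  exact ContinuousLinearMap.coe_injective this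

lemma sum_gns_self_zero' {σ σinv : QA n} (hσpos : σ.IsPositive) (hσinv' : σinv ∘L σ = 1)
    (f : Fin N → QA n) (h : ∑ j, gns σ (f j) (f j) = 0) (j : Fin N) : f j = 0 := by
  have := (Finset.sum_eq_zero_iff_of_nonneg
    (fun i _ => gns_self_nonneg' hσpos (f i))).mp h j (Finset.mem_univ j)
  exact gns_self_eq_zero' hσpos hσinv' this

end Aux

/-- For a Lindblad generator `L₀ a = Σ_j ([ℓ_j*,a]ℓ_j + ℓ_j*[a,ℓ_j])` self-adjoint on
`L₂(σ)` for a faithful state `σ`, the Dirichlet form satisfies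
`E_σ(a) = -⟨L₀ a, a⟩_σ = Σ_j ‖[ℓ_j*, a]‖_σ²`, and consequently `E_σ(a) = 0` iff
`a` commutes with all `ℓ_j` and `ℓ_j*`. -/
theorem dirichlet_form_and_kernel (n N : ℕ) (σ σinv : QA n)
    (hσpos : σ.IsPositive) (hσtr : trC σ = 1)
    (hσinv : σ ∘L σinv = 1) (hσinv' : σinv ∘L σ = 1)
    (ℓ : Fin N → QA n)
    (hsa : ∀ a b : QA n, gns σ (lindblad ℓ a) b = gns σ a (lindblad ℓ b)) :
    (∀ a : QA n,
        -(gns σ (lindblad ℓ a) a) = ∑ j : Fin N, gns σ (commStar (ℓ j) a) (commStar (ℓ j) a))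
    ∧ (∀ a : QA n,
        -(gns σ (lindblad ℓ a) a) = 0 ↔
          ∀ j : Fin N, ℓ j ∘L a = a ∘L ℓ j ∧
            ContinuousLinearMap.adjoint (ℓ j) ∘L a = a ∘L ContinuousLinearMap.adjoint (ℓ j)) := by
  have part1 : ∀ a : QA n,
      -(gns σ (lindblad ℓ a) a) = ∑ j : Fin N, gns σ (commStar (ℓ j) a) (commStar (ℓ j) a) :=
    fun a => master' σ ℓ hsa a a
  refine ⟨part1, fun a => ⟨fun h => ?_, fun h => ?_⟩⟩
  · -- forward direction
    -- extract vanishing of each commutator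
    have key : ∀ x : QA n, -(gns σ (lindblad ℓ x) x) = 0 →
        ∀ j : Fin N, commStar (ℓ j) x = 0 := by
      intro x hx j
      have hsum : ∑ j : Fin N, gns σ (commStar (ℓ j) x) (commStar (ℓ j) x) = 0 := by
        rw [← part1 x]; exact hx
      exact sum_gns_self_zero' hσpos hσinv' (fun j => commStar (ℓ j) x) hsum j
    have hδ : ∀ j : Fin N, commStar (ℓ j) a = 0 := key a h
    -- second conjunct
    have hconj2 : ∀ j : Fin N, ContinuousLinearMap.adjoint (ℓ j) ∘L a
        = a ∘L ContinuousLinearMap.adjoint (ℓ j) := by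
      intro j
      have := hδ j
      rw [commStar, sub_eq_zero] at this
      exact this
    -- L a = 0
    have hLa : lindblad ℓ a = 0 := by
      have hm := master' σ ℓ hsa a (lindblad ℓ a)
      have : ∀ j ∈ Finset.univ, gns σ (commStar (ℓ j) a)
          (commStar (ℓ j) (lindblad ℓ a)) = 0 := by
        intro j _
        rw [hδ j, gns_zero_left']
      rw [Finset.sum_eq_zero this] at hm
      have hLz : gns σ (lindblad ℓ a) (lindblad ℓ a) = 0 := neg_eq_zero.mp hm
      exact gns_self_eq_zero' hσpos hσinv' hLz
    -- L (star a) = 0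
    have hLsa : lindblad ℓ (star a) = 0 := by
      rw [← lindblad_star', hLa]; exact star_zero (QA n)
    -- E (star a) = 0, hence the commutators with star a vanish
    have hδs : ∀ j : Fin N, commStar (ℓ j) (star a) = 0 := by
      apply key
      rw [hLsa, gns_zero_left', neg_zero]
    intro j
    refine ⟨?_, hconj2 j⟩
    have := hδs j
    rw [commStar, sub_eq_zero] at this
    have hstar := congrArg star this
    simp only [comp_eq_mul', ← ContinuousLinearMap.star_eq_adjoint, starQ_mul, starQ_star]
      at hstar ⊢
    exact hstar.symm
  · -- reverse direction
    rw [part1 a]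
    apply Finset.sum_eq_zero
    intro j _
    have : commStar (ℓ j) a = 0 := by
      rw [commStar, sub_eq_zero]
      exact (h j).2
    rw [this, gns_zero_left']
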